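/- Fix 0 < ε < 1 and suppose each agent i is deterministically given t_i = ⌊m·e_i⌋ items, each item's value to agent i being an i.i.d. draw from a distribution D_i on [0,1] with mean μ_i > 0. Then there is m' (depending on 1/min_i e_i, 1/min_i μ_i, 1/ε) such that for all m ≥ m', with probability at least 1 − 1/m, every agent i's bundle is worth at least (1−3ε)·e_i·V_i(M), and hence at least (1−3ε)·WMMS_i. -/

import Mathlib

open Finset MeasureTheory ProbabilityTheory Filter

/-- The weighted maxmin share of agent `i`. -/
noncomputable def WMMS {n m : ℕ} (e : Fin n → ℝ) (v : Fin m → ℝ) (i : Fin n) : ℝ :=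
  ⨆ f : Fin m → Fin n, ⨅ j : Fin n,
    (∑ b ∈ Finset.univ.filter (fun b => f b = j), v b) * (e i / e j)


lemma exp_le_one_add_add_sq {x : ℝ} (hx : |x| ≤ 1) : Real.exp x ≤ 1 + x + x ^ 2 := by
  have h := Real.exp_bound hx (n := 2) (by norm_num)
  have h2 : ∑ m ∈ Finset.range 2, x ^ m / m.factorial = 1 + x := by
    simp [Finset.sum_range_succ]
  rw [h2] at h
  have h3 := (abs_sub_le_iff.1 h).1
  have hx2 : |x| ^ 2 = x ^ 2 := sq_abs x
  rw [hx2] at h3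
  norm_num [Nat.factorial] at h3
  nlinarith [sq_nonneg x]

lemma integrable_exp_mul_of_bounded {Ω : Type} [MeasureSpace Ω]
    [IsProbabilityMeasure (ℙ : Measure Ω)] {Y : Ω → ℝ} (hmeas : Measurable Y)
    {C : ℝ} (hbd : ∀ ω, Y ω ∈ Set.Icc (0:ℝ) C) (t : ℝ) :
    Integrable (fun ω => Real.exp (t * Y ω)) ℙ := by
  apply Integrable.mono' (integrable_const (Real.exp (|t| * C)))
    (Real.measurable_exp.comp (hmeas.const_mul t)).aestronglyMeasurable
  filter_upwards with ω
  simp only [Function.comp_apply]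
  rw [Real.norm_eq_abs, abs_of_pos (Real.exp_pos _)]
  apply Real.exp_le_exp.2
  obtain ⟨h0, h1⟩ := hbd ω
  nlinarith [mul_nonneg (sub_nonneg.2 (le_abs_self t)) h0,
    mul_nonneg (abs_nonneg t) (sub_nonneg.2 h1)]

lemma mgf_le_of_Icc {Ω : Type} [MeasureSpace Ω] [IsProbabilityMeasure (ℙ : Measure Ω)]
    {Y : Ω → ℝ} (hmeas : Measurable Y) (hbd : ∀ ω, Y ω ∈ Set.Icc (0:ℝ) 1)
    {μ0 : ℝ} (hmean : ∫ ω, Y ω = μ0) (t : ℝ) :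
    mgf Y ℙ t ≤ Real.exp ((Real.exp t - 1) * μ0) := by
  have hint : Integrable (fun ω => Real.exp (t * Y ω)) ℙ :=
    integrable_exp_mul_of_bounded hmeas hbd t
  have hYint : Integrable Y ℙ := by
    apply Integrable.mono' (integrable_const (1:ℝ)) hmeas.aestronglyMeasurable
    filter_upwards with ω
    rw [Real.norm_eq_abs, abs_of_nonneg (hbd ω).1]; exact (hbd ω).2
  have key : ∀ ω, Real.exp (t * Y ω) ≤ 1 + (Real.exp t - 1) * Y ω := by
    intro ω
    obtain ⟨h0, h1⟩ := hbd ω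
    have hc := convexOn_exp.2 (Set.mem_univ (0:ℝ)) (Set.mem_univ t)
      (by linarith : (0:ℝ) ≤ 1 - Y ω) h0 (by ring)
    simp only [smul_eq_mul, mul_zero, zero_add, Real.exp_zero, mul_one] at hc
    rw [mul_comm (Y ω) t] at hc
    nlinarith [hc]
  calc mgf Y ℙ t = ∫ ω, Real.exp (t * Y ω) := rfl
    _ ≤ ∫ ω, (1 + (Real.exp t - 1) * Y ω) ∂ℙ := by
        apply integral_mono hint ((integrable_const 1).add (hYint.const_mul _)) key
    _ = 1 + (Real.exp t - 1) * μ0 := by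
        rw [integral_add (integrable_const 1) (hYint.const_mul _), integral_const_mul, hmean]
        simp
    _ ≤ Real.exp ((Real.exp t - 1) * μ0) := by
        linarith [Real.add_one_le_exp ((Real.exp t - 1) * μ0)]
section Tails
variable {Ω : Type} [MeasureSpace Ω] [IsProbabilityMeasure (ℙ : Measure Ω)] {m : ℕ}
  {Y : Fin m → Ω → ℝ}

lemma sum_mem_Icc (hbd : ∀ j ω, Y j ω ∈ Set.Icc (0:ℝ) 1) (s : Finset (Fin m)) (ω : Ω) :
    (∑ j ∈ s, Y j) ω ∈ Set.Icc (0:ℝ) (s.card : ℝ) := by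
  rw [Finset.sum_apply]
  constructor
  · exact Finset.sum_nonneg fun j _ => (hbd j ω).1
  · calc ∑ j ∈ s, Y j ω ≤ ∑ _j ∈ s, (1:ℝ) := Finset.sum_le_sum fun j _ => (hbd j ω).2
      _ = s.card := by simp

lemma mgf_sum_le (hmeas : ∀ j, Measurable (Y j))
    (hindep : iIndepFun Y ℙ)
    (hbd : ∀ j ω, Y j ω ∈ Set.Icc (0:ℝ) 1) {μ0 : ℝ} (hμ0 : 0 ≤ μ0)
    (hmean : ∀ j, ∫ ω, Y j ω = μ0) (s : Finset (Fin m)) {t : ℝ} (ht : |t| ≤ 1) :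
    mgf (∑ j ∈ s, Y j) ℙ t ≤ Real.exp ((t + t^2) * (s.card * μ0)) := by
  rw [hindep.mgf_sum hmeas]
  have hterm : ∀ j ∈ s, mgf (Y j) ℙ t ≤ Real.exp ((Real.exp t - 1) * μ0) :=
    fun j _ => mgf_le_of_Icc (hmeas j) (hbd j) (hmean j) t
  calc ∏ j ∈ s, mgf (Y j) ℙ t ≤ ∏ _j ∈ s, Real.exp ((Real.exp t - 1) * μ0) :=
        Finset.prod_le_prod (fun j _ => mgf_nonneg) hterm
    _ = Real.exp ((s.card : ℝ) * ((Real.exp t - 1) * μ0)) := by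
        rw [Finset.prod_const, ← Real.exp_nat_mul]
    _ ≤ Real.exp ((t + t^2) * (s.card * μ0)) := by
        apply Real.exp_le_exp.2
        have h1 : Real.exp t - 1 ≤ t + t^2 := by
          have := exp_le_one_add_add_sq ht; linarith
        have h2 : (0:ℝ) ≤ (s.card : ℝ) := Nat.cast_nonneg _
        nlinarith [mul_le_mul_of_nonneg_left (mul_le_mul_of_nonneg_right h1 hμ0) h2]

lemma tail_up (hmeas : ∀ j, Measurable (Y j))
    (hindep : iIndepFun Y ℙ)
    (hbd : ∀ j ω, Y j ω ∈ Set.Icc (0:ℝ) 1) {μ0 : ℝ} (hμ0 : 0 ≤ μ0)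
    (hmean : ∀ j, ∫ ω, Y j ω = μ0) (s : Finset (Fin m)) {t c : ℝ}
    (ht0 : 0 ≤ t) (ht1 : t ≤ 1) :
    (ℙ {ω | (s.card : ℝ) * μ0 + c ≤ ∑ j ∈ s, Y j ω}).toReal
      ≤ Real.exp (-(t * c) + t^2 * (s.card * μ0)) := by
  have hset : {ω | (s.card : ℝ) * μ0 + c ≤ ∑ j ∈ s, Y j ω}
      = {ω | (s.card : ℝ) * μ0 + c ≤ (∑ j ∈ s, Y j) ω} := by
    ext ω; simp [Finset.sum_apply]
  rw [hset]
  calc (ℙ {ω | (s.card : ℝ) * μ0 + c ≤ (∑ j ∈ s, Y j) ω}).toReal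
      ≤ Real.exp (-t * ((s.card : ℝ) * μ0 + c)) * mgf (∑ j ∈ s, Y j) ℙ t :=
        measure_ge_le_exp_mul_mgf _ ht0
          (integrable_exp_mul_of_bounded (Y := ∑ j ∈ s, Y j) (by rw [show (∑ j ∈ s, Y j) = fun a => ∑ j ∈ s, Y j a from funext fun a => Finset.sum_apply _ _ _]; exact s.measurable_sum fun j _ => hmeas j)
            (sum_mem_Icc hbd s) t)
    _ ≤ Real.exp (-t * ((s.card : ℝ) * μ0 + c)) * Real.exp ((t + t^2) * (s.card * μ0)) := by
        apply mul_le_mul_of_nonneg_left _ (Real.exp_pos _).le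
        exact mgf_sum_le hmeas hindep hbd hμ0 hmean s (abs_le.2 ⟨by linarith, ht1⟩)
    _ = Real.exp (-t * ((s.card : ℝ) * μ0 + c) + (t + t^2) * (s.card * μ0)) :=
        (Real.exp_add _ _).symm
    _ ≤ Real.exp (-(t * c) + t^2 * (s.card * μ0)) := by
        apply Real.exp_le_exp.2; ring_nf; rfl

lemma tail_low (hmeas : ∀ j, Measurable (Y j))
    (hindep : iIndepFun Y ℙ)
    (hbd : ∀ j ω, Y j ω ∈ Set.Icc (0:ℝ) 1) {μ0 : ℝ} (hμ0 : 0 ≤ μ0)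
    (hmean : ∀ j, ∫ ω, Y j ω = μ0) (s : Finset (Fin m)) {t c : ℝ}
    (ht0 : 0 ≤ t) (ht1 : t ≤ 1) :
    (ℙ {ω | ∑ j ∈ s, Y j ω ≤ (s.card : ℝ) * μ0 - c}).toReal
      ≤ Real.exp (-(t * c) + t^2 * (s.card * μ0)) := by
  have hset : {ω | ∑ j ∈ s, Y j ω ≤ (s.card : ℝ) * μ0 - c}
      = {ω | (∑ j ∈ s, Y j) ω ≤ (s.card : ℝ) * μ0 - c} := by
    ext ω; simp [Finset.sum_apply]
  rw [hset]
  calc (ℙ {ω | (∑ j ∈ s, Y j) ω ≤ (s.card : ℝ) * μ0 - c}).toReal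
      ≤ Real.exp (-(-t) * ((s.card : ℝ) * μ0 - c)) * mgf (∑ j ∈ s, Y j) ℙ (-t) :=
        measure_le_le_exp_mul_mgf _ (neg_nonpos.2 ht0)
          (integrable_exp_mul_of_bounded (Y := ∑ j ∈ s, Y j) (by rw [show (∑ j ∈ s, Y j) = fun a => ∑ j ∈ s, Y j a from funext fun a => Finset.sum_apply _ _ _]; exact s.measurable_sum fun j _ => hmeas j)
            (sum_mem_Icc hbd s) (-t))
    _ ≤ Real.exp (-(-t) * ((s.card : ℝ) * μ0 - c)) *
          Real.exp (((-t) + (-t)^2) * (s.card * μ0)) := by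
        apply mul_le_mul_of_nonneg_left _ (Real.exp_pos _).le
        exact mgf_sum_le hmeas hindep hbd hμ0 hmean s
          (by rw [abs_neg]; exact abs_le.2 ⟨by linarith, ht1⟩)
    _ = Real.exp (-(-t) * ((s.card : ℝ) * μ0 - c) + ((-t) + (-t)^2) * (s.card * μ0)) :=
        (Real.exp_add _ _).symm
    _ ≤ Real.exp (-(t * c) + t^2 * (s.card * μ0)) := by
        apply Real.exp_le_exp.2; ring_nf; rfl

end Tails
lemma wmms_bounds {n m : ℕ} (hn : 0 < n) (e : Fin n → ℝ) (hepos : ∀ i, 0 < e i)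
    (hesum : ∑ i, e i = 1) (v : Fin m → ℝ) (hv : ∀ b, 0 ≤ v b) (i : Fin n) :
    0 ≤ WMMS e v i ∧ WMMS e v i ≤ e i * ∑ b, v b := by
  have hne : Nonempty (Fin n) := ⟨⟨0, hn⟩⟩
  have key : ∀ f : Fin m → Fin n,
      (⨅ j : Fin n, (∑ b ∈ Finset.univ.filter (fun b => f b = j), v b) * (e i / e j))
        ≤ e i * ∑ b, v b := by
    intro f
    have hsum : ∑ j : Fin n, ∑ b ∈ Finset.univ.filter (fun b => f b = j), v b = ∑ b, v b :=
      Finset.sum_fiberwise _ _ _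
    have hsum2 : ∑ j : Fin n, (e j * ∑ b, v b) = ∑ b, v b := by
      rw [← Finset.sum_mul, hesum, one_mul]
    obtain ⟨j, -, hj⟩ := Finset.exists_le_of_sum_le Finset.univ_nonempty
      (le_of_eq (hsum.trans hsum2.symm))
    refine (ciInf_le (Set.Finite.bddBelow (Set.finite_range _)) j).trans ?_
    calc (∑ b ∈ Finset.univ.filter (fun b => f b = j), v b) * (e i / e j)
        ≤ (e j * ∑ b, v b) * (e i / e j) := by
          apply mul_le_mul_of_nonneg_right hj
          exact div_nonneg (hepos i).le (hepos j).le
      _ = e i * ∑ b, v b := by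
          have := (hepos j).ne'
          field_simp
  constructor
  · refine le_trans ?_ (le_ciSup (f := fun f : Fin m → Fin n =>
      ⨅ j : Fin n, (∑ b ∈ Finset.univ.filter (fun b => f b = j), v b) * (e i / e j)) ?_
      (fun _ => i))
    · apply le_ciInf
      intro j
      apply mul_nonneg (Finset.sum_nonneg fun b _ => hv b)
      exact div_nonneg (hepos i).le (hepos j).le
    · exact ⟨e i * ∑ b, v b, by rintro x ⟨f, rfl⟩; exact key f⟩
  · exact ciSup_le key
lemma exists_threshold {c a K : ℝ} (hc : 0 < c) (ha : 0 < a) (hK : 0 ≤ K) :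
    ∃ m' : ℕ, ∀ m : ℕ, m' ≤ m →
      1 ≤ a * m ∧ K * Real.exp (-c * m) ≤ 1 / m ∧ 1 ≤ (m : ℝ) := by
  have h1 : Filter.Tendsto (fun x : ℝ => (c * x) ^ 1 * Real.exp (-(c * x))) atTop (nhds 0) :=
    (Real.tendsto_pow_mul_exp_neg_atTop_nhds_zero 1).comp (tendsto_id.const_mul_atTop hc)
  have h2 : Filter.Tendsto (fun x : ℝ => (K / c) * ((c * x) ^ 1 * Real.exp (-(c * x)))) atTop
      (nhds 0) := by
    have := h1.const_mul (K / c)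
    simpa using this
  have h3 : (fun x : ℝ => (K / c) * ((c * x) ^ 1 * Real.exp (-(c * x))))
      = fun x : ℝ => K * x * Real.exp (-(c * x)) := by
    funext x; field_simp
  rw [h3] at h2
  have h4 : ∀ᶠ x : ℝ in atTop, K * x * Real.exp (-(c * x)) < 1 :=
    h2.eventually_lt_const one_pos
  have h5 : ∀ᶠ x : ℝ in atTop, 1 ≤ a * x :=
    (tendsto_id.const_mul_atTop ha).eventually_ge_atTop 1
  have h6 : ∀ᶠ x : ℝ in atTop, 1 ≤ x := eventually_ge_atTop 1
  have h7 := (h4.and h5).and h6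
  have h8 : ∀ᶠ m : ℕ in atTop,
      (K * (m:ℝ) * Real.exp (-(c * m)) < 1 ∧ 1 ≤ a * m) ∧ 1 ≤ (m:ℝ) :=
    tendsto_natCast_atTop_atTop.eventually h7
  obtain ⟨m', hm'⟩ := eventually_atTop.1 h8
  refine ⟨m', fun m hm => ?_⟩
  obtain ⟨⟨hlt, hax⟩, hx1⟩ := hm' m hm
  have hmpos : (0:ℝ) < m := lt_of_lt_of_le one_pos hx1
  refine ⟨hax, ?_, hx1⟩
  rw [le_div_iff₀ hmpos]
  calc K * Real.exp (-c * m) * m = K * (m:ℝ) * Real.exp (-(c * m)) := by ring_nf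
    _ ≤ 1 := hlt.le
lemma det_step {m a b c T U ε : ℝ} (hm : (0:ℝ) < m) (hε0 : 0 < ε)
    (ha : 0 < a) (ha1 : a ≤ 1) (hb : 0 < b)
    (hεam : 1 ≤ ε * a * m) (hcase : 0 < 1 - 3 * ε)
    (hcard : m * a - 1 ≤ c) (hT : c * b - ε * a * b * m ≤ T)
    (hU : U ≤ m * b + ε * a * b * m) :
    (1 - 3 * ε) * a * U ≤ T := by
  have hSb : (m * a - 1) * b ≤ c * b := mul_le_mul_of_nonneg_right hcard hb.le
  have hb1 : b ≤ ε * a * m * b := by nlinarith [hεam, hb.le]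
  have h2 : 0 ≤ ε * a * b * m * (1 - a) :=
    mul_nonneg (mul_nonneg (mul_nonneg (mul_nonneg hε0.le ha.le) hb.le) hm.le)
      (by linarith)
  have h3 : 0 ≤ ε ^ 2 * a ^ 2 * b * m :=
    mul_nonneg (mul_nonneg (mul_nonneg (sq_nonneg ε) (sq_nonneg a)) hb.le) hm.le
  have hmid : (1 - 3 * ε) * a * (m * b + ε * a * b * m) ≤ c * b - ε * a * b * m := by
    nlinarith [hSb, hb1, h2, h3]
  have hstep : (1 - 3 * ε) * a * U ≤ (1 - 3 * ε) * a * (m * b + ε * a * b * m) :=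
    mul_le_mul_of_nonneg_left hU (mul_nonneg hcase.le ha.le)
  linarith

theorem stmt_15 (n : ℕ) (hn : 0 < n) (ε : ℝ) (hε0 : 0 < ε) (hε1 : ε < 1)
    (e : Fin n → ℝ) (hepos : ∀ i, 0 < e i) (hesum : ∑ i, e i = 1)
    (μ : Fin n → ℝ) (hμpos : ∀ i, 0 < μ i) :
    ∃ m' : ℕ, ∀ m : ℕ, m' ≤ m → n ≤ m →
      ∀ (Ω : Type) (_ : MeasureSpace Ω) (_ : IsProbabilityMeasure (ℙ : Measure Ω))
        (X : Fin n → Fin m → Ω → ℝ),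
        (∀ i j, Measurable (X i j)) →
        (∀ i, iIndepFun (fun j => X i j) ℙ) →
        (∀ i j j', Measure.map (X i j) ℙ = Measure.map (X i j') ℙ) →
        (∀ i j ω, X i j ω ∈ Set.Icc (0 : ℝ) 1) →
        (∀ i j, ∫ ω, X i j ω = μ i) →
        ∀ S : Fin n → Finset (Fin m),
          (∀ i, (S i).card = ⌊(m : ℝ) * e i⌋₊) →
          (Pairwise fun i i' => Disjoint (S i) (S i')) →
          1 - 1 / (m : ℝ) ≤
            (ℙ {ω | ∀ i : Fin n,
              (1 - 3 * ε) * e i * (∑ j, X i j ω) ≤ (∑ j ∈ S i, X i j ω) ∧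
              (1 - 3 * ε) * WMMS e (fun j => X i j ω) i ≤
                ∑ j ∈ S i, X i j ω}).toReal := by
  have hne : Nonempty (Fin n) := ⟨⟨0, hn⟩⟩
  obtain ⟨E, hEpos, hEle⟩ : ∃ E : ℝ, 0 < E ∧ ∀ i, E ≤ e i * μ i := by
    refine ⟨Finset.univ.inf' Finset.univ_nonempty (fun i => e i * μ i), ?_, ?_⟩
    · rw [Finset.lt_inf'_iff]
      exact fun i _ => mul_pos (hepos i) (hμpos i)
    · exact fun i => Finset.inf'_le _ (Finset.mem_univ i)
  obtain ⟨m', hm'⟩ := exists_threshold (c := ε^2 * E^2 / 4) (a := ε * E) (K := 2 * n)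
    (by positivity) (by positivity) (by positivity)
  refine ⟨m', fun m hm hnm Ω _ _ X hXmeas hXindep _hXid hXbd hXmean S hScard _hSdisj => ?_⟩
  obtain ⟨hA, hB, hm1⟩ := hm' m hm
  have hmpos : (0:ℝ) < m := lt_of_lt_of_le one_pos hm1
  have hμ1 : ∀ i, μ i ≤ 1 := by
    intro i
    have j0 : Fin m := ⟨0, by omega⟩
    rw [← hXmean i j0]
    have hint : Integrable (fun ω => X i j0 ω) ℙ := by
      apply Integrable.mono' (integrable_const (1:ℝ)) (hXmeas i j0).aestronglyMeasurable
      filter_upwards with ω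
      rw [Real.norm_eq_abs, abs_of_nonneg (hXbd i j0 ω).1]; exact (hXbd i j0 ω).2
    calc ∫ ω, X i j0 ω ≤ ∫ _ω, (1:ℝ) ∂ℙ :=
          integral_mono hint (integrable_const 1) fun ω => (hXbd i j0 ω).2
      _ = 1 := by simp
  have he1 : ∀ i, e i ≤ 1 := fun i =>
    hesum ▸ Finset.single_le_sum (fun j _ => (hepos j).le) (Finset.mem_univ i)
  obtain ⟨δ, hδeq⟩ : ∃ δ : Fin n → ℝ, ∀ i, δ i = ε * e i * μ i :=
    ⟨fun i => ε * e i * μ i, fun _ => rfl⟩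
  have hδpos : ∀ i, 0 < δ i := fun i => by
    rw [hδeq]; have := hepos i; have := hμpos i; positivity
  have hδ1 : ∀ i, δ i ≤ 1 := fun i => by
    rw [hδeq]
    have h1 := hμ1 i; have h2 := he1 i; have h3 := (hepos i).le; have h4 := (hμpos i).le
    nlinarith [mul_le_one₀ h2 h4 h1, hε1.le, mul_nonneg h3 h4]
  have hδE : ∀ i, ε * E ≤ δ i := fun i => by
    rw [hδeq]
    have := mul_le_mul_of_nonneg_left (hEle i) hε0.le
    linarith [this]
  -- bad events
  set B1 : Fin n → Set Ω := fun i =>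
    {ω | ∑ j ∈ S i, X i j ω ≤ ((S i).card : ℝ) * μ i - δ i * (m:ℝ)} with hB1def
  set B2 : Fin n → Set Ω := fun i =>
    {ω | (m:ℝ) * μ i + δ i * (m:ℝ) ≤ ∑ j, X i j ω} with hB2def
  set r : ℝ := Real.exp (-(ε^2 * E^2 / 4) * m) with hrdef
  have hr0 : 0 ≤ r := (Real.exp_pos _).le
  have hexp_le : ∀ i : Fin n, ∀ cd : ℝ, cd ≤ (m:ℝ) * μ i →
      -((δ i / 2) * (δ i * m)) + (δ i / 2)^2 * cd ≤ -(ε^2 * E^2 / 4) * m := by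
    intro i cd hcd
    have h1 : (ε * E)^2 ≤ (δ i)^2 := by
      apply pow_le_pow_left₀ (by positivity) (hδE i)
    have h2 : (δ i / 2)^2 * cd ≤ (δ i / 2)^2 * ((m:ℝ) * μ i) :=
      mul_le_mul_of_nonneg_left hcd (by positivity)
    have h3 : (m:ℝ) * μ i ≤ m := by nlinarith [hμ1 i, hmpos.le, (hμpos i).le]
    have h4 : (δ i / 2)^2 * ((m:ℝ) * μ i) ≤ (δ i / 2)^2 * m :=
      mul_le_mul_of_nonneg_left h3 (by positivity)
    nlinarith [mul_le_mul_of_nonneg_right h1 hmpos.le]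
  have key : ∀ i : Fin n, (ℙ (B1 i)).toReal ≤ r ∧ (ℙ (B2 i)).toReal ≤ r := by
    intro i
    have ht0 : 0 ≤ δ i / 2 := by linarith [hδpos i]
    have ht1 : δ i / 2 ≤ 1 := by linarith [hδ1 i]
    constructor
    · have h1 := tail_low (Y := fun j => X i j) (fun j => hXmeas i j) (hXindep i)
        (fun j ω => hXbd i j ω) (hμpos i).le (fun j => hXmean i j) (S i)
        (c := δ i * m) ht0 ht1
      refine h1.trans (Real.exp_le_exp.2 ?_)
      have hcard : ((S i).card : ℝ) ≤ m := by
        exact_mod_cast (Finset.card_le_univ (S i)).trans_eq (by simp)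
      have : ((S i).card : ℝ) * μ i ≤ (m:ℝ) * μ i :=
        mul_le_mul_of_nonneg_right hcard (hμpos i).le
      exact hexp_le i _ this
    · have h1 := tail_up (Y := fun j => X i j) (fun j => hXmeas i j) (hXindep i)
        (fun j ω => hXbd i j ω) (hμpos i).le (fun j => hXmean i j) Finset.univ
        (c := δ i * m) ht0 ht1
      have hseteq : B2 i = {ω | ((Finset.univ : Finset (Fin m)).card : ℝ) * μ i + δ i * m
          ≤ ∑ j, X i j ω} := by
        rw [hB2def]; simp
      rw [hseteq]
      refine h1.trans (Real.exp_le_exp.2 ?_)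
      have : ((Finset.univ : Finset (Fin m)).card : ℝ) * μ i ≤ (m:ℝ) * μ i := by
        simp
      exact hexp_le i _ this
  set G : Set Ω := ⋂ i, ((B1 i)ᶜ ∩ (B2 i)ᶜ) with hGdef
  have hGc : ℙ Gᶜ ≤ ENNReal.ofReal (2 * n * r) := by
    have hGceq : Gᶜ = ⋃ i, (B1 i ∪ B2 i) := by
      rw [hGdef]
      simp [Set.compl_iInter, Set.compl_inter, Set.compl_union, compl_compl]
    rw [hGceq]
    calc ℙ (⋃ i, B1 i ∪ B2 i) ≤ ∑' i, ℙ (B1 i ∪ B2 i) := measure_iUnion_le _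
      _ = ∑ i, ℙ (B1 i ∪ B2 i) := tsum_fintype _
      _ ≤ ∑ _i : Fin n, ENNReal.ofReal (2 * r) := by
          apply Finset.sum_le_sum
          intro i _
          calc ℙ (B1 i ∪ B2 i) ≤ ℙ (B1 i) + ℙ (B2 i) := measure_union_le _ _
            _ ≤ ENNReal.ofReal r + ENNReal.ofReal r := by
                apply add_le_add
                · rw [← ENNReal.ofReal_toReal (measure_ne_top ℙ (B1 i))]
                  exact ENNReal.ofReal_le_ofReal (key i).1
                · rw [← ENNReal.ofReal_toReal (measure_ne_top ℙ (B2 i))]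
                  exact ENNReal.ofReal_le_ofReal (key i).2
            _ = ENNReal.ofReal (2 * r) := by
                rw [← ENNReal.ofReal_add hr0 hr0]; ring_nf
      _ = ENNReal.ofReal (2 * n * r) := by
          rw [Finset.sum_const, Finset.card_univ, Fintype.card_fin, nsmul_eq_mul,
            show (2 : ℝ) * n * r = (n:ℝ) * (2 * r) by ring,
            ENNReal.ofReal_mul (Nat.cast_nonneg n), ENNReal.ofReal_natCast]
  have hGc2 : ℙ Gᶜ ≤ ENNReal.ofReal (1 / m) :=
    hGc.trans (ENNReal.ofReal_le_ofReal hB)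
  -- the target event contains G
  set T : Set Ω := {ω | ∀ i : Fin n,
      (1 - 3 * ε) * e i * (∑ j, X i j ω) ≤ (∑ j ∈ S i, X i j ω) ∧
      (1 - 3 * ε) * WMMS e (fun j => X i j ω) i ≤ ∑ j ∈ S i, X i j ω} with hTdef
  have hsub : G ⊆ T := by
    intro ω hω i
    have hωi := Set.mem_iInter.1 hω i
    have hT1 : ((S i).card : ℝ) * μ i - δ i * m < ∑ j ∈ S i, X i j ω := not_le.1 hωi.1
    have hU1 : ∑ j, X i j ω < (m:ℝ) * μ i + δ i * m := not_le.1 hωi.2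
    have hv : ∀ b, 0 ≤ X i b ω := fun b => (hXbd i b ω).1
    have hT0 : 0 ≤ ∑ j ∈ S i, X i j ω := Finset.sum_nonneg fun j _ => hv j
    have hcard : (m:ℝ) * e i - 1 ≤ ((S i).card : ℝ) := by
      rw [hScard i]
      exact (Nat.sub_one_lt_floor _).le
    have hεeim : 1 ≤ ε * e i * m := by
      have h1 : ε * E * m ≤ ε * (e i * μ i) * m :=
        mul_le_mul_of_nonneg_right (mul_le_mul_of_nonneg_left (hEle i) hε0.le) hmpos.le
      have h2 : ε * (e i * μ i) * m ≤ ε * e i * m := by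
        have h5 : 0 ≤ ε * e i * (m:ℝ) * (1 - μ i) :=
          mul_nonneg (mul_nonneg (mul_nonneg hε0.le (hepos i).le) hmpos.le)
            (by linarith [hμ1 i])
        nlinarith [h5]
      linarith [hA]
    have hfirst : (1 - 3 * ε) * e i * (∑ j, X i j ω) ≤ ∑ j ∈ S i, X i j ω := by
      rcases le_or_gt (1 - 3 * ε) 0 with hcase | hcase
      · have h0 : (1 - 3 * ε) * e i ≤ 0 :=
          mul_nonpos_of_nonpos_of_nonneg hcase (hepos i).le
        have h1 : (1 - 3 * ε) * e i * (∑ j, X i j ω) ≤ 0 :=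
          mul_nonpos_of_nonpos_of_nonneg h0 (Finset.sum_nonneg fun j _ => hv j)
        linarith
      · refine det_step hmpos hε0 (hepos i) (he1 i) (hμpos i) hεeim hcase hcard ?_ ?_
        · rw [← hδeq i]; exact hT1.le
        · rw [← hδeq i]; exact hU1.le
    refine ⟨hfirst, ?_⟩
    obtain ⟨hW0, hWle⟩ := wmms_bounds hn e hepos hesum (fun j => X i j ω) hv i
    rcases le_or_gt (1 - 3 * ε) 0 with hcase | hcase
    · have : (1 - 3 * ε) * WMMS e (fun j => X i j ω) i ≤ 0 :=
        mul_nonpos_of_nonpos_of_nonneg hcase hW0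
      linarith
    · calc (1 - 3 * ε) * WMMS e (fun j => X i j ω) i
          ≤ (1 - 3 * ε) * (e i * ∑ j, X i j ω) :=
            mul_le_mul_of_nonneg_left hWle hcase.le
        _ = (1 - 3 * ε) * e i * (∑ j, X i j ω) := by ring
        _ ≤ ∑ j ∈ S i, X i j ω := hfirst
  have h1 : (1 : ENNReal) ≤ ℙ T + ENNReal.ofReal (1 / m) := by
    calc (1 : ENNReal) = ℙ (G ∪ Gᶜ) := by rw [Set.union_compl_self, measure_univ]
      _ ≤ ℙ G + ℙ Gᶜ := measure_union_le _ _
      _ ≤ ℙ T + ENNReal.ofReal (1 / m) := add_le_add (measure_mono hsub) hGc2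
  have h2 : (1 : ℝ) ≤ (ℙ T).toReal + 1 / m := by
    have h3 := ENNReal.toReal_mono (by
      exact ENNReal.add_ne_top.2 ⟨measure_ne_top _ _, ENNReal.ofReal_ne_top⟩) h1
    rwa [ENNReal.toReal_one, ENNReal.toReal_add (measure_ne_top _ _) ENNReal.ofReal_ne_top,
      ENNReal.toReal_ofReal (by positivity)] at h3
  linarith
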